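/- For all integers α ≥ 1 and β ≥ 0, there exists an integer d₀ such that for all integers d ≥ d₀ and n satisfying n ≥ 2d and n ≥ d + 2^{2α+1}, the inequality f_{α,β}(d-1, n-1) + 2·f_{α,β}(d, ⌊n/2⌋) + 2 ≤ f_{α,β}(d, n) holds. -/

import Mathlib

set_option maxHeartbeats 1000000 in
/-- Lemma 2.2 (inductive-step lemma): for all integers `α ≥ 1` and `β ≥ 0`
there is a threshold `d₀` such that for all `d ≥ d₀` and `n ≥ 2d` with
`n ≥ d + 2^{2α+1}`, the inductive-step inequality
`f_{α,β}(d-1,n-1) + 2 f_{α,β}(d,⌊n/2⌋) + 2 ≤ f_{α,β}(d,n)` holds, where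
`f_{α,β}(d,n) = (n-d)^{log₂(β + d/α)}` (so
`f_{α,β}(d-1,n-1) = (n-d)^{log₂(β + (d-1)/α)}`). -/
theorem inductive_step_lemma (α β : ℕ) (hα : 1 ≤ α) :
    ∃ d₀ : ℕ, ∀ d n : ℕ, d₀ ≤ d → 2 * d ≤ n → d + 2 ^ (2 * α + 1) ≤ n →
      ((n : ℝ) - d) ^ Real.logb 2 ((β : ℝ) + ((d : ℝ) - 1) / α)
        + 2 * (((n / 2 : ℕ) : ℝ) - d) ^ Real.logb 2 ((β : ℝ) + (d : ℝ) / α)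
        + 2
      ≤ ((n : ℝ) - d) ^ Real.logb 2 ((β : ℝ) + (d : ℝ) / α) := by
  refine ⟨2 ^ (16 * α), fun d n hd hn1 _ => ?_⟩
  have hα1 : (1:ℝ) ≤ (α:ℝ) := by exact_mod_cast hα
  have hαpos : (0:ℝ) < (α:ℝ) := by linarith
  -- numeric: 8α ≤ 2^{16α} ≤ d
  have h8n : 8 * α ≤ 2 ^ (16 * α) := by
    calc 8 * α ≤ 8 * 2 ^ α := Nat.mul_le_mul_left 8 (Nat.lt_two_pow_self (n := α)).le
      _ = 2 ^ (3 + α) := by rw [pow_add]; norm_num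
      _ ≤ 2 ^ (16 * α) := Nat.pow_le_pow_right (by norm_num) (by omega)
  have hdR : ((2:ℝ)) ^ (16 * α) ≤ (d:ℝ) := by exact_mod_cast hd
  have h8R : (8:ℝ) * α ≤ (d:ℝ) := by
    have : (8:ℝ) * α ≤ (2:ℝ) ^ (16*α) := by exact_mod_cast h8n
    linarith
  have h2d : (2:ℝ) ≤ (d:ℝ) := by
    have : (2:ℝ) ≤ (2:ℝ) ^ (16*α) := by
      calc (2:ℝ) = 2^1 := (pow_one 2).symm
        _ ≤ 2^(16*α) := pow_le_pow_right₀ (by norm_num) (by omega)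
    linarith
  have hβ0 : (0:ℝ) ≤ (β:ℝ) := Nat.cast_nonneg β
  set A : ℝ := (β:ℝ) + (d:ℝ)/α with hAdef
  set B : ℝ := (β:ℝ) + ((d:ℝ)-1)/α with hBdef
  set x : ℝ := (n:ℝ) - d with hxdef
  set c : ℝ := Real.logb 2 A with hcdef
  set c' : ℝ := Real.logb 2 B with hc'def
  clear_value c c' x A B
  have hA8 : (8:ℝ) ≤ A := by
    have : (8:ℝ) ≤ (d:ℝ)/α := (le_div_iff₀ hαpos).mpr (by linarith)
    simp only [hAdef]; linarith
  have hA0 : (0:ℝ) < A := by linarith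
  have hB0 : (0:ℝ) < B := by
    have : (0:ℝ) < ((d:ℝ)-1)/α := div_pos (by linarith) hαpos
    simp only [hBdef]; linarith
  have hAB : A - B = 1/α := by
    simp only [hAdef, hBdef]; field_simp; ring
  have hBA : B ≤ A := by
    have h1 : (0:ℝ) < 1/(α:ℝ) := by positivity
    linarith [hAB]
  -- x bounds
  have hxd : (d:ℝ) ≤ x := by
    have : (2:ℝ) * d ≤ (n:ℝ) := by exact_mod_cast hn1
    simp only [hxdef]; linarith
  have hx2 : (2:ℝ) ≤ x := by linarith
  have hx0 : (0:ℝ) < x := by linarith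
  have hc0 : (0:ℝ) ≤ c := by
    rw [hcdef]; exact Real.logb_nonneg (by norm_num) (by linarith)
  -- middle term bound
  have hy0 : (0:ℝ) ≤ ((n/2 : ℕ):ℝ) - d := by
    have : d ≤ n / 2 := Nat.le_div_iff_mul_le (by norm_num) |>.mpr (by omega)
    have := (Nat.cast_le (α := ℝ)).mpr this
    linarith
  have hy2 : ((n/2 : ℕ):ℝ) - d ≤ x / 2 := by
    have h1 : ((n/2 : ℕ):ℝ) ≤ (n:ℝ)/2 := Nat.cast_div_le
    have h2 : (0:ℝ) ≤ (d:ℝ) := Nat.cast_nonneg d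
    simp only [hxdef]; linarith
  have h2c : (2:ℝ) ^ c = A := by
    rw [hcdef]; exact Real.rpow_logb (by norm_num) (by norm_num) hA0
  have hxc0 : (0:ℝ) < x ^ c := Real.rpow_pos_of_pos hx0 c
  have hAxc : A ≤ x ^ c := by
    calc A = (2:ℝ)^c := h2c.symm
      _ ≤ x ^ c := Real.rpow_le_rpow (by norm_num) hx2 hc0
  have hmid : (((n/2 : ℕ):ℝ) - d) ^ c ≤ x ^ c / A := by
    calc (((n/2 : ℕ):ℝ) - d) ^ c ≤ (x/2) ^ c := Real.rpow_le_rpow hy0 hy2 hc0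
      _ = x ^ c / 2 ^ c := Real.div_rpow hx0.le (by norm_num) c
      _ = x ^ c / A := by rw [h2c]
  have htwo : (2:ℝ) ≤ 2 * (x ^ c / A) := by
    have : (1:ℝ) ≤ x ^ c / A := (one_le_div hA0).mpr hAxc
    linarith
  -- the exponent difference
  have hlog2pos : (0:ℝ) < Real.log 2 := Real.log_pos (by norm_num)
  have hlog2le : Real.log 2 ≤ 1 := by
    have := Real.log_le_sub_one_of_pos (by norm_num : (0:ℝ) < 2)
    linarith
  have hδ : c - c' = Real.log (A/B) / Real.log 2 := by
    simp only [hcdef, hc'def, Real.logb, Real.log_div hA0.ne' hB0.ne']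
    ring
  have hlogAB : 1/((α:ℝ)*A) ≤ Real.log (A/B) := by
    have h1 : Real.log (B/A) ≤ B/A - 1 := Real.log_le_sub_one_of_pos (div_pos hB0 hA0)
    have h2 : Real.log (A/B) = -(Real.log (B/A)) := by
      rw [Real.log_div hA0.ne' hB0.ne', Real.log_div hB0.ne' hA0.ne']; ring
    have h3 : 1 - B/A = 1/((α:ℝ)*A) := by
      rw [one_sub_div hA0.ne', hAB, div_div]
    linarith [h2, h1, h3.symm]
  have hδlb : 1/((α:ℝ)*A) ≤ c - c' := by
    rw [hδ]
    have h0 : (0:ℝ) < Real.log (A/B) := lt_of_lt_of_le (by positivity) hlogAB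
    calc 1/((α:ℝ)*A) ≤ Real.log (A/B) := hlogAB
      _ = Real.log (A/B) / 1 := (div_one _).symm
      _ ≤ Real.log (A/B) / Real.log 2 := by
          apply div_le_div_of_nonneg_left h0.le hlog2pos hlog2le
  -- log x lower bound
  have hlogx : (8:ℝ)*α ≤ Real.log x := by
    have h1 : Real.log ((2:ℝ)^(16*α)) ≤ Real.log x :=
      Real.log_le_log (by positivity) (by linarith)
    have h2 : Real.log ((2:ℝ)^(16*α)) = (16*α : ℕ) * Real.log 2 := Real.log_pow _ _
    have h3 : ((16*α : ℕ):ℝ) = 16*(α:ℝ) := by push_cast; ring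
    have h4 : (1/2 : ℝ) ≤ Real.log 2 := by
      have := Real.log_two_gt_d9; linarith
    calc (8:ℝ)*α = 16*(α:ℝ)*(1/2) := by ring
      _ ≤ 16*(α:ℝ)*Real.log 2 := by
          apply mul_le_mul_of_nonneg_left h4 (by positivity)
      _ = Real.log ((2:ℝ)^(16*α)) := by rw [h2, h3]
      _ ≤ Real.log x := h1
  have hlogx0 : (0:ℝ) ≤ Real.log x := by nlinarith
  -- key: (c-c') * log x ≥ 8/A
  have hkey : (8:ℝ)/A ≤ (c - c') * Real.log x := by
    have hδ0 : (0:ℝ) ≤ c - c' := le_trans (by positivity) hδlb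
    calc (8:ℝ)/A = (1/((α:ℝ)*A)) * (8*α) := by field_simp
      _ ≤ (c - c') * Real.log x := by
          apply mul_le_mul hδlb hlogx (by positivity) hδ0
  -- exp bound
  set t : ℝ := (c - c') * Real.log x with htdef
  clear_value t
  have ht0 : (0:ℝ) ≤ t := le_trans (by positivity) hkey
  have hexp : Real.exp (-t) ≤ 1 - 4/A := by
    have h1 : 1 + t ≤ Real.exp t := by
      have := Real.add_one_le_exp t; linarith
    have h1t : (0:ℝ) < 1 + t := by linarith
    have h2 : Real.exp (-t) = 1 / Real.exp t := by
      rw [Real.exp_neg]; rw [one_div]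
    have h3 : Real.exp (-t) ≤ 1/(1+t) := by
      rw [h2]
      exact one_div_le_one_div_of_le h1t h1
    have h4A : 4/A ≤ 1/2 := by
      rw [div_le_div_iff₀ hA0 (by norm_num)]; linarith
    have h4A0 : (0:ℝ) < 4/A := by positivity
    have h5 : 1 ≤ (1 - 4/A) * (1 + t) := by
      have hk' : 8*(1/A) ≤ t := by rw [show (8:ℝ)*(1/A) = 8/A by ring]; exact hkey
      have h4A' : 4*(1/A) ≤ 1/2 := by rw [show (4:ℝ)*(1/A) = 4/A by ring]; exact h4A
      have hprod := mul_le_mul_of_nonneg_left h4A' ht0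
      rw [show (1:ℝ) - 4/A = 1 - 4*(1/A) by ring]
      nlinarith [hk', hprod]
    have h6 : 1/(1+t) ≤ 1 - 4/A := by
      rw [div_le_iff₀ h1t]; linarith
    linarith
  -- first term bound
  have hfirst : x ^ c' ≤ (1 - 4/A) * x ^ c := by
    have h1 : x ^ c' = x ^ c * x ^ (c' - c) := by
      rw [← Real.rpow_add hx0]; ring_nf
    have h2 : x ^ (c' - c) = Real.exp (Real.log x * (c' - c)) :=
      Real.rpow_def_of_pos hx0 _
    have h3 : Real.log x * (c' - c) = -t := by rw [htdef]; ring
    calc x ^ c' = x ^ c * Real.exp (-t) := by rw [h1, h2, h3]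
      _ ≤ x ^ c * (1 - 4/A) := by
          apply mul_le_mul_of_nonneg_left hexp hxc0.le
      _ = (1 - 4/A) * x ^ c := by ring
  -- assemble
  have hmid2 : 2 * ((((n/2 : ℕ):ℝ) - d) ^ c) ≤ 2 * (x ^ c / A) :=
    by linarith [hmid]
  have hfin : (1 - 4/A) * x ^ c + 2 * (x ^ c / A) + 2 * (x ^ c / A) = x ^ c := by
    field_simp; ring
  calc x ^ c' + 2 * ((((n/2 : ℕ):ℝ) - d) ^ c) + 2
      ≤ (1 - 4/A) * x ^ c + 2 * (x ^ c / A) + 2 * (x ^ c / A) := by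
        linarith [hfirst, hmid2, htwo]
    _ = x ^ c := hfin
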